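/- If σ₁,...,σₙ and σ'₁,...,σ'ₘ are both splittings of a finite set T of propositional formulas, then the collection of nonempty intersections σᵢ ∩ σ'ⱼ is again a splitting of T. -/

import Mathlib

inductive PropForm : Type where
  | var : ℕ → PropForm
  | tru : PropForm
  | fls : PropForm
  | neg : PropForm → PropForm
  | conj : PropForm → PropForm → PropForm
  | disj : PropForm → PropForm → PropForm
deriving DecidableEq

namespace PropForm

def eval (v : ℕ → Bool) : PropForm → Bool
  | var p => v p
  | tru => true
  | fls => false
  | neg φ => !(eval v φ)
  | conj φ ψ => eval v φ && eval v ψ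
  | disj φ ψ => eval v φ || eval v ψ

def sig : PropForm → Finset ℕ
  | var p => {p}
  | tru => ∅
  | fls => ∅
  | neg φ => sig φ
  | conj φ ψ => sig φ ∪ sig ψ
  | disj φ ψ => sig φ ∪ sig ψ

def impl (φ ψ : PropForm) : PropForm := disj (neg φ) ψ

def iff (φ ψ : PropForm) : PropForm := conj (impl φ ψ) (impl ψ φ)


def subst (p : ℕ) (b : Bool) : PropForm → PropForm
  | var q => if q = p then (if b then tru else fls) else var q
  | tru => tru
  | fls => fls
  | neg φ => neg (subst p b φ)
  | conj φ ψ => conj (subst p b φ) (subst p b ψ)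
  | disj φ ψ => disj (subst p b φ) (subst p b ψ)

lemma eval_subst (v : ℕ → Bool) (p : ℕ) (b : Bool) (φ : PropForm) :
    eval v (subst p b φ) = eval (Function.update v p b) φ := by
  induction φ with
  | var q =>
    by_cases h : q = p
    · subst h; cases b <;> simp [subst, eval, Function.update]
    · simp [subst, eval, h, Function.update]
  | tru => rfl
  | fls => rfl
  | neg φ ih => simp [subst, eval, ih]
  | conj φ ψ ih1 ih2 => simp [subst, eval, ih1, ih2]
  | disj φ ψ ih1 ih2 => simp [subst, eval, ih1, ih2]

lemma sig_subst (p : ℕ) (b : Bool) (φ : PropForm) :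
    sig (subst p b φ) ⊆ (sig φ).erase p := by
  induction φ with
  | var q =>
    by_cases h : q = p
    · subst h; cases b <;> simp [subst, sig]
    · intro x hx
      simp only [subst, h, if_false, sig, Finset.mem_singleton] at hx
      subst hx
      exact Finset.mem_erase.mpr ⟨h, Finset.mem_singleton_self _⟩
  | tru => simp [subst, sig]
  | fls => simp [subst, sig]
  | neg φ ih => simpa [subst, sig] using ih
  | conj φ ψ ih1 ih2 =>
      simp only [subst, sig, Finset.erase_union_distrib]
      exact Finset.union_subset_union ih1 ih2
  | disj φ ψ ih1 ih2 =>
      simp only [subst, sig, Finset.erase_union_distrib]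
      exact Finset.union_subset_union ih1 ih2

def forget (p : ℕ) (φ : PropForm) : PropForm := disj (subst p true φ) (subst p false φ)

lemma eval_forget (v : ℕ → Bool) (p : ℕ) (φ : PropForm) :
    eval v (forget p φ) = true ↔ ∃ b, eval (Function.update v p b) φ = true := by
  simp only [forget, eval, Bool.or_eq_true, eval_subst]
  constructor
  · rintro (h | h)
    exacts [⟨true, h⟩, ⟨false, h⟩]
  · rintro ⟨b, h⟩
    cases b
    exacts [Or.inr h, Or.inl h]

lemma sig_forget (p : ℕ) (φ : PropForm) : sig (forget p φ) ⊆ (sig φ).erase p :=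
  Finset.union_subset (sig_subst _ _ _) (sig_subst _ _ _)

def forgetL (l : List ℕ) (φ : PropForm) : PropForm := l.foldr forget φ

lemma eval_congr (v w : ℕ → Bool) (φ : PropForm) (h : ∀ x ∈ sig φ, v x = w x) :
    eval v φ = eval w φ := by
  induction φ with
  | var q => exact h q (Finset.mem_singleton_self _)
  | tru => rfl
  | fls => rfl
  | neg φ ih => simp [eval, ih (fun x hx => h x hx)]
  | conj φ ψ ih1 ih2 =>
      simp [eval, ih1 (fun x hx => h x (Finset.mem_union_left _ hx)),
        ih2 (fun x hx => h x (Finset.mem_union_right _ hx))]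
  | disj φ ψ ih1 ih2 =>
      simp [eval, ih1 (fun x hx => h x (Finset.mem_union_left _ hx)),
        ih2 (fun x hx => h x (Finset.mem_union_right _ hx))]

lemma eval_forgetL (l : List ℕ) (φ : PropForm) (v : ℕ → Bool) :
    eval v (forgetL l φ) = true ↔
      ∃ w, (∀ x, x ∉ l → w x = v x) ∧ eval w φ = true := by
  induction l generalizing v with
  | nil =>
    constructor
    · intro h; exact ⟨v, fun _ _ => rfl, h⟩
    · rintro ⟨w, hw, h⟩
      show eval v φ = true
      rwa [eval_congr v w φ (fun x _ => (hw x List.not_mem_nil).symm)]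
  | cons p l ih =>
    show eval v (forget p (forgetL l φ)) = true ↔ _
    rw [eval_forget]
    constructor
    · rintro ⟨b, hb⟩
      obtain ⟨w, hw1, hw2⟩ := (ih _).mp hb
      refine ⟨w, fun x hx => ?_, hw2⟩
      have hxp : x ≠ p := fun h => hx (h ▸ List.mem_cons_self (a := p) (l := l))
      have hxl : x ∉ l := fun h => hx (List.mem_cons_of_mem _ h)
      rw [hw1 x hxl, Function.update_of_ne hxp]
    · rintro ⟨w, hw1, hw2⟩
      refine ⟨w p, (ih _).mpr ⟨w, fun x hx => ?_, hw2⟩⟩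
      by_cases hxp : x = p
      · subst hxp; rw [Function.update_self]
      · rw [Function.update_of_ne hxp]
        exact hw1 x (by simp [hxp, hx])

lemma sig_forgetL (l : List ℕ) (φ : PropForm) :
    ∀ x ∈ sig (forgetL l φ), x ∈ sig φ ∧ x ∉ l := by
  induction l with
  | nil => exact fun x hx => ⟨hx, List.not_mem_nil⟩
  | cons p l ih =>
    intro x hx
    have hx' := sig_forget p (forgetL l φ) hx
    obtain ⟨hxp, hxl⟩ := Finset.mem_erase.mp hx'
    obtain ⟨h1, h2⟩ := ih x hxl
    exact ⟨h1, by simp [hxp, h2]⟩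

noncomputable def proj (φ : PropForm) (d : Finset ℕ) : PropForm := forgetL ((φ.sig \ d).toList) φ

lemma sig_proj (φ : PropForm) (d : Finset ℕ) : sig (proj φ d) ⊆ d := by
  intro x hx
  obtain ⟨h1, h2⟩ := sig_forgetL _ _ x hx
  rw [Finset.mem_toList, Finset.mem_sdiff] at h2
  by_contra hxd
  exact h2 ⟨h1, hxd⟩

lemma eval_proj (φ : PropForm) (d : Finset ℕ) (v : ℕ → Bool) :
    eval v (proj φ d) = true ↔
      ∃ w, (∀ x, x ∈ d ∨ x ∉ sig φ → w x = v x) ∧ eval w φ = true := by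
  rw [proj, eval_forgetL]
  constructor
  · rintro ⟨w, hw1, hw2⟩
    refine ⟨w, fun x hx => hw1 x ?_, hw2⟩
    rw [Finset.mem_toList, Finset.mem_sdiff]
    rintro ⟨hs, hd⟩
    rcases hx with h | h
    exacts [hd h, h hs]
  · rintro ⟨w, hw1, hw2⟩
    refine ⟨w, fun x hx => hw1 x ?_, hw2⟩
    rw [Finset.mem_toList, Finset.mem_sdiff] at hx
    by_cases hs : x ∈ sig φ
    · exact Or.inl (by by_contra hd; exact hx ⟨hs, hd⟩)
    · exact Or.inr hs


end PropForm

/-- Semantic entailment: every model of `φ` is a model of `ψ`. -/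
def Entails (φ ψ : PropForm) : Prop :=
  ∀ v : ℕ → Bool, φ.eval v = true → ψ.eval v = true

/-- Conjunction of a list of formulas. -/
def bigConj (l : List PropForm) : PropForm := l.foldr PropForm.conj PropForm.tru

/-- Signature of a finite set (list) of formulas. -/
def sigT (T : List PropForm) : Finset ℕ := T.foldr (fun φ s => φ.sig ∪ s) ∅

/-- `P` is a partition of the finite set `s` of atoms. -/
def IsPartition (P : Finset (Finset ℕ)) (s : Finset ℕ) : Prop :=
  (∀ b ∈ P, b.Nonempty) ∧
  (∀ b ∈ P, ∀ c ∈ P, b ≠ c → b ∩ c = ∅) ∧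
  P.biUnion id = s

/-- Logical equivalence of formulas. -/
def PropEquiv (φ ψ : PropForm) : Prop := ∀ v : ℕ → Bool, φ.eval v = ψ.eval v

/-- `P` is a splitting of `T`: a partition of `sig(T)` admitting an axiomatisation of
`T` by formulas whose signatures are contained in the respective blocks. -/
def IsSplitting (P : Finset (Finset ℕ)) (T : List PropForm) : Prop :=
  IsPartition P (sigT T) ∧
  ∃ χ : Finset ℕ → PropForm,
    (∀ b ∈ P, (χ b).sig ⊆ b) ∧
    PropEquiv (bigConj (P.toList.map χ)) (bigConj T)

/-- `P` is at least as fine as `Q`: every block of `Q` contains some block of `P`. -/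
def Finer (P Q : Finset (Finset ℕ)) : Prop := ∀ b ∈ Q, ∃ c ∈ P, c ⊆ b

lemma eval_bigConj (v : ℕ → Bool) (l : List PropForm) :
    (bigConj l).eval v = true ↔ ∀ ψ ∈ l, ψ.eval v = true := by
  induction l with
  | nil => simp [bigConj, PropForm.eval]
  | cons a l ih =>
    show (PropForm.conj a (bigConj l)).eval v = true ↔ _
    simp [PropForm.eval, Bool.and_eq_true, ih]

lemma sig_bigConj (T : List PropForm) : (bigConj T).sig = sigT T := by
  induction T with
  | nil => rfl
  | cons a T ih =>
    show (PropForm.conj a (bigConj T)).sig = _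
    simp [PropForm.sig, sigT, ih]


/-- The nonempty pairwise intersections of two splittings of `T` again form a
splitting of `T`. -/
theorem splitting_intersection (T : List PropForm) (P P' : Finset (Finset ℕ))
    (h : IsSplitting P T) (h' : IsSplitting P' T) :
    IsSplitting (((P ×ˢ P').image fun q => q.1 ∩ q.2).filter fun b => b ≠ ∅) T := by
  classical
  obtain ⟨⟨hPne, hPdisj, hPun⟩, χ, hχsig, hχeq⟩ := h
  obtain ⟨⟨hP'ne, hP'disj, hP'un⟩, χ', hχ'sig, hχ'eq⟩ := h'
  set φ := bigConj T with hφdef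
  set R := ((P ×ˢ P').image fun q => q.1 ∩ q.2).filter (fun b => b ≠ ∅) with hRdef
  have hmemR : ∀ d, d ∈ R ↔ (∃ b ∈ P, ∃ c ∈ P', b ∩ c = d) ∧ d ≠ ∅ := by
    intro d
    simp only [hRdef, Finset.mem_filter, Finset.mem_image, Finset.mem_product, Prod.exists]
    constructor
    · rintro ⟨⟨b, c, ⟨hb, hc⟩, rfl⟩, hne⟩
      exact ⟨⟨b, hb, c, hc, rfl⟩, hne⟩
    · rintro ⟨⟨b, hb, c, hc, rfl⟩, hne⟩
      exact ⟨⟨b, c, ⟨hb, hc⟩, rfl⟩, hne⟩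
  have hsigφ : φ.sig = sigT T := sig_bigConj T
  have hφχ : ∀ u, φ.eval u = true ↔ ∀ b ∈ P, (χ b).eval u = true := by
    intro u
    rw [← hχeq u, eval_bigConj]
    constructor
    · intro hh b hb
      exact hh _ (List.mem_map_of_mem (f := χ) (Finset.mem_toList.mpr hb))
    · rintro hh ψ hψ
      obtain ⟨b, hb, rfl⟩ := List.mem_map.mp hψ
      exact hh b (Finset.mem_toList.mp hb)
  have hφχ' : ∀ u, φ.eval u = true ↔ ∀ c ∈ P', (χ' c).eval u = true := by
    intro u
    rw [← hχ'eq u, eval_bigConj]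
    constructor
    · intro hh c hc
      exact hh _ (List.mem_map_of_mem (f := χ') (Finset.mem_toList.mpr hc))
    · rintro hh ψ hψ
      obtain ⟨c, hc, rfl⟩ := List.mem_map.mp hψ
      exact hh c (Finset.mem_toList.mp hc)
  have key : ∀ v : ℕ → Bool, (∀ d ∈ R, (PropForm.proj φ d).eval v = true) →
      φ.eval v = true := by
    intro v hv
    rw [hφχ]
    intro b hb
    -- pick a block c₀ of P' meeting b
    obtain ⟨x₀, hx₀⟩ := hPne b hb
    have hx₀T : x₀ ∈ P'.biUnion id := by
      rw [hP'un, ← hPun]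
      exact Finset.mem_biUnion.mpr ⟨b, hb, hx₀⟩
    obtain ⟨c₀, hc₀, hx₀c₀⟩ := Finset.mem_biUnion.mp hx₀T
    have hd₀ : b ∩ c₀ ∈ R := (hmemR _).mpr ⟨⟨b, hb, c₀, hc₀, rfl⟩,
      Finset.ne_empty_of_mem (Finset.mem_inter.mpr ⟨hx₀, hx₀c₀⟩)⟩
    -- a model of φ agreeing with v on b ∩ c, for each c ∈ P'
    have hWc : ∀ c ∈ P', ∃ w, (∀ x, x ∈ b ∩ c ∨ x ∉ φ.sig → w x = v x) ∧
        φ.eval w = true := by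
      intro c hc
      by_cases hbc : b ∩ c = ∅
      · obtain ⟨w, hw1, hw2⟩ := (PropForm.eval_proj φ (b ∩ c₀) v).mp (hv _ hd₀)
        refine ⟨w, fun x hx => ?_, hw2⟩
        rcases hx with hx | hx
        · rw [hbc] at hx
          exact absurd hx (Finset.notMem_empty x)
        · exact hw1 x (Or.inr hx)
      · have hd : b ∩ c ∈ R := (hmemR _).mpr ⟨⟨b, hb, c, hc, rfl⟩, hbc⟩
        obtain ⟨w, hw1, hw2⟩ := (PropForm.eval_proj φ (b ∩ c) v).mp (hv _ hd)
        exact ⟨w, hw1, hw2⟩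
    choose W hW1 hW2 using hWc
    have Wirrel : ∀ (c1 c2 : Finset ℕ) (h1 : c1 ∈ P') (h2 : c2 ∈ P') (x : ℕ),
        c1 = c2 → W c1 h1 x = W c2 h2 x := by
      rintro c1 c2 h1 h2 x rfl
      rfl
    -- amalgamated valuation
    let u : ℕ → Bool := fun x =>
      if hx : ∃ c, ∃ _ : c ∈ P', x ∈ c ∧ x ∉ b then
        W hx.choose hx.choose_spec.choose x
      else v x
    have hub : ∀ x ∈ b, u x = v x := by
      intro x hx
      have : ¬ ∃ c, ∃ _ : c ∈ P', x ∈ c ∧ x ∉ b := by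
        rintro ⟨c, hc, _, hxb⟩
        exact hxb hx
      exact dif_neg this
    have huc : ∀ c, ∀ hc : c ∈ P', ∀ x ∈ c, u x = W c hc x := by
      intro c hc x hxc
      by_cases hxb : x ∈ b
      · rw [hub x hxb]
        exact (hW1 c hc x (Or.inl (Finset.mem_inter.mpr ⟨hxb, hxc⟩))).symm
      · have hx : ∃ c, ∃ _ : c ∈ P', x ∈ c ∧ x ∉ b := ⟨c, hc, hxc, hxb⟩
        have hu : u x = W hx.choose hx.choose_spec.choose x := dif_pos hx
        rw [hu]
        apply Wirrel
        by_contra hne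
        have hdisj := hP'disj _ hx.choose_spec.choose c hc hne
        have hxmem : x ∈ hx.choose ∩ c :=
          Finset.mem_inter.mpr ⟨hx.choose_spec.choose_spec.1, hxc⟩
        rw [hdisj] at hxmem
        exact Finset.notMem_empty x hxmem
    have huχ' : ∀ c ∈ P', (χ' c).eval u = true := by
      intro c hc
      rw [PropForm.eval_congr u (W c hc) (χ' c)
        (fun x hx => huc c hc x (hχ'sig c hc hx))]
      exact (hφχ' (W c hc)).mp (hW2 c hc) c hc
    have huφ : φ.eval u = true := (hφχ' u).mpr huχ'
    have huχb : (χ b).eval u = true := (hφχ u).mp huφ b hb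
    rw [PropForm.eval_congr v u (χ b) (fun x hx => (hub x (hχsig b hb hx)).symm)]
    exact huχb
  refine ⟨⟨?_, ?_, ?_⟩, fun d => PropForm.proj φ d, ?_, ?_⟩
  · intro d hd
    exact Finset.nonempty_iff_ne_empty.mpr ((hmemR d).mp hd).2
  · intro d hd e he hne
    obtain ⟨⟨b, hb, c, hc, rfl⟩, _⟩ := (hmemR d).mp hd
    obtain ⟨⟨b', hb', c', hc', rfl⟩, _⟩ := (hmemR e).mp he
    by_contra hne'
    obtain ⟨x, hx⟩ := Finset.nonempty_iff_ne_empty.mpr hne'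
    rw [Finset.mem_inter, Finset.mem_inter, Finset.mem_inter] at hx
    obtain ⟨⟨hxb, hxc⟩, hxb', hxc'⟩ := hx
    have hbb : b = b' := by
      by_contra hbb
      have := hPdisj b hb b' hb' hbb
      have : x ∈ b ∩ b' := Finset.mem_inter.mpr ⟨hxb, hxb'⟩
      rw [hPdisj b hb b' hb' hbb] at this
      exact Finset.notMem_empty x this
    have hcc : c = c' := by
      by_contra hcc
      have : x ∈ c ∩ c' := Finset.mem_inter.mpr ⟨hxc, hxc'⟩
      rw [hP'disj c hc c' hc' hcc] at this
      exact Finset.notMem_empty x this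
    exact hne (by rw [hbb, hcc])
  · ext x
    rw [Finset.mem_biUnion]
    constructor
    · rintro ⟨d, hd, hxd⟩
      obtain ⟨⟨b, hb, c, hc, rfl⟩, _⟩ := (hmemR d).mp hd
      rw [← hPun]
      exact Finset.mem_biUnion.mpr ⟨b, hb, (Finset.mem_inter.mp hxd).1⟩
    · intro hx
      obtain ⟨b, hb, hxb⟩ := Finset.mem_biUnion.mp ((hPun.symm ▸ hx) : x ∈ P.biUnion id)
      obtain ⟨c, hc, hxc⟩ := Finset.mem_biUnion.mp ((hP'un.symm ▸ hx) : x ∈ P'.biUnion id)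
      have hxbc : x ∈ b ∩ c := Finset.mem_inter.mpr ⟨hxb, hxc⟩
      exact ⟨b ∩ c, (hmemR _).mpr ⟨⟨b, hb, c, hc, rfl⟩, Finset.ne_empty_of_mem hxbc⟩, hxbc⟩
  · intro d hd
    exact PropForm.sig_proj φ d
  · intro v
    have hiff : (bigConj (R.toList.map (fun d => PropForm.proj φ d))).eval v = true ↔
        φ.eval v = true := by
      rw [eval_bigConj]
      constructor
      · intro hh
        refine key v (fun d hd => ?_)
        exact hh _ (List.mem_map_of_mem (Finset.mem_toList.mpr hd))
      · intro hh ψ hψ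
        obtain ⟨d, hd, rfl⟩ := List.mem_map.mp hψ
        exact (PropForm.eval_proj φ d v).mpr ⟨v, fun x _ => rfl, hh⟩
    show _ = φ.eval v
    by_cases h2 : φ.eval v = true
    · rw [h2, hiff.mpr h2]
    · have h1 : (bigConj (R.toList.map (fun d => PropForm.proj φ d))).eval v ≠ true :=
        fun hh => h2 (hiff.mp hh)
      simp only [Bool.not_eq_true] at h1 h2
      rw [h1, h2]
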